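/- For s > 1 set η = s^{1/2} − s^{−1/2}. If z ∈ ℂ has Im(z) ≥ η, then |F(z²/2 − 1)| ≥ s, where F(u) = u + √(u²−1) with the branch of the square root chosen so that |F(u)| ≥ 1. -/

import Mathlib

/-- Ellipse lemma (α = 1 case): for `s > 1` set `η = √s − 1/√s`.  If
`Im(z) ≥ η`, then `|F(z²/2 − 1)| ≥ s`, where `F(u) = u + √(u²−1)` with the
branch of the square root chosen so that `|F(u)| ≥ 1` (formalized: for any
`c` with `c² = u² − 1` and `1 ≤ |u + c|`, one has `s ≤ |u + c|`). -/
theorem stmt14 (s : ℝ) (hs : 1 < s) (z : ℂ)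
    (hz : Real.sqrt s - (Real.sqrt s)⁻¹ ≤ z.im) (c : ℂ)
    (hc : c ^ 2 = (z ^ 2 / 2 - 1) ^ 2 - 1)
    (hbranch : 1 ≤ ‖z ^ 2 / 2 - 1 + c‖) :
    s ≤ ‖z ^ 2 / 2 - 1 + c‖ := by
  set w : ℂ := z ^ 2 / 2 - 1 + c with hwdef
  have hw0 : w ≠ 0 := by
    intro h
    rw [h] at hbranch
    simp at hbranch
    linarith
  have hinv : w⁻¹ = z ^ 2 / 2 - 1 - c := by
    apply inv_eq_of_mul_eq_one_right
    rw [hwdef]; ring_nf; rw [hc]; ring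
  have hz2 : z ^ 2 = w + w⁻¹ + 2 := by
    rw [hinv, hwdef]; ring
  obtain ⟨v, hv⟩ : ∃ v : ℂ, v ^ 2 = w := by
    rcases IsAlgClosed.exists_pow_nat_eq w (n := 2) (by norm_num) with ⟨v, hv⟩
    exact ⟨v, hv⟩
  have hv0 : v ≠ 0 := by
    intro h; apply hw0; rw [← hv, h]; ring
  set r : ℝ := ‖v‖ with hrdef
  have hr0 : 0 < r := norm_pos_iff.mpr hv0
  have hr2 : r ^ 2 = ‖w‖ := by
    rw [← hv, norm_pow]
  have hr1 : 1 ≤ r := by nlinarith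
  -- z = ±(v + v⁻¹)
  have hzv : (z - (v + v⁻¹)) * (z + (v + v⁻¹)) = 0 := by
    have hvinv : v⁻¹ * v⁻¹ = w⁻¹ := by
      rw [← hv]; rw [← mul_inv]; ring_nf
    have : z ^ 2 - (v + v⁻¹) ^ 2 = 0 := by
      rw [hz2]
      have : (v + v⁻¹) ^ 2 = v ^ 2 + v⁻¹ * v⁻¹ + 2 * (v * v⁻¹) := by ring
      rw [this, hv, hvinv, mul_inv_cancel₀ hv0]
      ring
    calc (z - (v + v⁻¹)) * (z + (v + v⁻¹)) = z ^ 2 - (v + v⁻¹) ^ 2 := by ring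
    _ = 0 := this
  -- Im bound: |Im z| ≤ r - 1/r
  have him : |z.im| ≤ r - r⁻¹ := by
    have hnorm : Complex.normSq v = r ^ 2 := by
      rw [hrdef, Complex.sq_norm]
    have himv : (v + v⁻¹).im = v.im * (1 - (r ^ 2)⁻¹) := by
      rw [Complex.add_im, Complex.inv_im, hnorm]
      field_simp
      ring
    have hvimle : |v.im| ≤ r := by
      rw [hrdef]; exact Complex.abs_im_le_norm v
    have hfac : 0 ≤ 1 - (r ^ 2)⁻¹ := by
      have : (r ^ 2)⁻¹ ≤ 1 := by
        rw [inv_le_one_iff₀]; right; nlinarith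
      linarith
    have key : |(v + v⁻¹).im| ≤ r - r⁻¹ := by
      rw [himv, abs_mul, abs_of_nonneg hfac]
      have : |v.im| * (1 - (r ^ 2)⁻¹) ≤ r * (1 - (r ^ 2)⁻¹) :=
        mul_le_mul_of_nonneg_right hvimle hfac
      calc |v.im| * (1 - (r ^ 2)⁻¹) ≤ r * (1 - (r ^ 2)⁻¹) := this
      _ = r - r⁻¹ := by field_simp
    rcases mul_eq_zero.mp hzv with h | h
    · have : z = v + v⁻¹ := by linear_combination h
      rw [this]; exact key
    · have : z = -(v + v⁻¹) := by linear_combination h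
      rw [this, Complex.neg_im, abs_neg]; exact key
  -- conclude
  set a : ℝ := Real.sqrt s with hadef
  have ha0 : 0 < a := Real.sqrt_pos.mpr (by linarith)
  have ha2 : a ^ 2 = s := Real.sq_sqrt (by linarith)
  have h1 : a - a⁻¹ ≤ r - r⁻¹ := by
    calc a - a⁻¹ ≤ z.im := hz
    _ ≤ |z.im| := le_abs_self _
    _ ≤ r - r⁻¹ := him
  have har : a ≤ r := by
    by_contra h
    push_neg at h
    have h2 : a⁻¹ < r⁻¹ := inv_strictAnti₀ hr0 h
    linarith
  have : s ≤ r ^ 2 := by nlinarith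
  rw [← hr2]; exact this
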